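/- Proposition 4 (single switching point for the aware firm under constant capacity when demand can never exceed capacity): Suppose Λ·(1 − (u+p)/m) ≤ S. Then for every horizon N and initial reputation R_1 ∈ [0,1], there exists k with 0 ≤ k ≤ N such that the single-switch sequence A^k, defined by A^k_i = H for i ≤ k and A^k_i = L for k < i ≤ N, maximizes the constant-capacity total profit Π_S(·, R_1) over all advertisement sequences in {L,H}^N. In particular, the maximum is attained by a sequence in which no high-level advertisement ever follows a low-level advertisement. -/
import Mathlib


noncomputable section

/-- Post-advertisement reputation map. -/
def frep (α R a : ℝ) : ℝ := R + (1 - R) * a ^ α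

/-- Demand function. -/
def dem (Λ q x : ℝ) : ℝ := if 0 < x then max 0 (Λ * (1 - q / x)) else 0

/-- Constant-capacity reputation trajectory (0-indexed periods), capacity `S`. -/
def repC (α w Λ q S : ℝ) (A : ℕ → ℝ) (R1 : ℝ) : ℕ → ℝ
  | 0 => R1
  | i + 1 =>
      let R' := frep α (repC α w Λ q S A R1 i) (A i)
      let d := dem Λ q R'
      (1 - w) * R' + w * (if 0 < d then min S d / d else R')

/-- Constant-capacity total profit over horizon `N`. -/
def profitC (α w Λ q S p c cA : ℝ) (A : ℕ → ℝ) (R1 : ℝ) (N : ℕ) : ℝ :=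
  ∑ i ∈ Finset.range N,
    (p * min S (dem Λ q (frep α (repC α w Λ q S A R1 i) (A i)))
      - c * S - cA * A i)


namespace SW

/-- Bundled hypotheses. -/
structure Hyp (α w Λ q S p L H : ℝ) : Prop where
  hΛ : 0 < Λ
  hq0 : 0 < q
  hq1 : q < 1
  hα : 0 < α
  hw0 : 0 ≤ w
  hw1 : w ≤ 1
  hL0 : 0 ≤ L
  hLH : L ≤ H
  hH1 : H ≤ 1
  hS0 : 0 < S
  hcap : Λ * (1 - q) ≤ S
  hp : 0 < p

theorem frep_mem {α : ℝ} (hα : 0 < α) {R a : ℝ} (hR0 : 0 ≤ R) (hR1 : R ≤ 1)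
    (ha0 : 0 ≤ a) (ha1 : a ≤ 1) : 0 ≤ frep α R a ∧ frep α R a ≤ 1 := by
  have h1 : 0 ≤ a ^ α := Real.rpow_nonneg ha0 α
  have h2 : a ^ α ≤ 1 := Real.rpow_le_one ha0 ha1 hα.le
  unfold frep; constructor <;> nlinarith

theorem frep_mono_R {α : ℝ} (hα : 0 < α) {R R' a : ℝ} (h : R ≤ R')
    (ha0 : 0 ≤ a) (ha1 : a ≤ 1) : frep α R a ≤ frep α R' a := by
  have h2 : a ^ α ≤ 1 := Real.rpow_le_one ha0 ha1 hα.le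
  unfold frep; nlinarith

theorem frep_mono_a {α : ℝ} (hα : 0 < α) {R a b : ℝ} (hR1 : R ≤ 1)
    (ha0 : 0 ≤ a) (hab : a ≤ b) : frep α R a ≤ frep α R b := by
  have := Real.rpow_le_rpow ha0 hab hα.le
  unfold frep; nlinarith

theorem dem_nonneg (Λ q x : ℝ) : 0 ≤ dem Λ q x := by
  unfold dem; split
  · exact le_max_left _ _
  · exact le_rfl

theorem dem_mono {Λ q : ℝ} (hΛ : 0 < Λ) (hq : 0 < q) {x y : ℝ} (hxy : x ≤ y) :
    dem Λ q x ≤ dem Λ q y := by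
  by_cases hx : 0 < x
  · have hy : 0 < y := lt_of_lt_of_le hx hxy
    unfold dem
    rw [if_pos hx, if_pos hy]
    have h1 : q / y ≤ q / x := by gcongr
    have h2 : Λ * (1 - q / x) ≤ Λ * (1 - q / y) := by nlinarith
    exact max_le_max le_rfl h2
  · calc dem Λ q x = 0 := by unfold dem; rw [if_neg hx]
      _ ≤ dem Λ q y := dem_nonneg _ _ _

theorem dem_le_S {Λ q S : ℝ} (hΛ : 0 < Λ) (hq : 0 < q) (hS0 : 0 < S)
    (hcap : Λ * (1 - q) ≤ S) {x : ℝ} (hx1 : x ≤ 1) : dem Λ q x ≤ S := by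
  unfold dem; split
  · rename_i hx
    apply max_le hS0.le
    have h1 : q ≤ q / x := by rw [le_div_iff₀ hx]; nlinarith
    nlinarith
  · exact hS0.le

/-- The "post fill-rate" map when demand never exceeds capacity. -/
def gfun (Λ q x : ℝ) : ℝ := if 0 < dem Λ q x then 1 else x

theorem gfun_le_one {Λ q x : ℝ} (hx : x ≤ 1) : gfun Λ q x ≤ 1 := by
  unfold gfun; split
  · exact le_rfl
  · exact hx

theorem le_gfun {Λ q x : ℝ} (hx : x ≤ 1) : x ≤ gfun Λ q x := by
  unfold gfun; split
  · exact hx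
  · exact le_rfl

theorem gfun_nonneg {Λ q x : ℝ} (hx : 0 ≤ x) : 0 ≤ gfun Λ q x := by
  unfold gfun; split
  · norm_num
  · exact hx

theorem gfun_mono {Λ q : ℝ} (hΛ : 0 < Λ) (hq : 0 < q) {x y : ℝ} (hxy : x ≤ y)
    (hx1 : x ≤ 1) : gfun Λ q x ≤ gfun Λ q y := by
  unfold gfun
  by_cases h : 0 < dem Λ q x
  · rw [if_pos h, if_pos (lt_of_lt_of_le h (dem_mono hΛ hq hxy))]
  · rw [if_neg h]
    split
    · exact hx1
    · exact hxy

/-- One-step reputation update (valid form when demand ≤ capacity). -/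
def stepR (α w Λ q R a : ℝ) : ℝ :=
  (1 - w) * frep α R a + w * gfun Λ q (frep α R a)

theorem psi_mono {w Λ q : ℝ} (hΛ : 0 < Λ) (hq : 0 < q) (hw0 : 0 ≤ w) (hw1 : w ≤ 1)
    {x y : ℝ} (hxy : x ≤ y) (hx1 : x ≤ 1) :
    (1 - w) * x + w * gfun Λ q x ≤ (1 - w) * y + w * gfun Λ q y := by
  have := gfun_mono hΛ hq hxy hx1
  nlinarith

theorem stepR_mem {α w Λ q S p L H : ℝ} (h : Hyp α w Λ q S p L H) {R a : ℝ}
    (hR0 : 0 ≤ R) (hR1 : R ≤ 1) (ha0 : 0 ≤ a) (ha1 : a ≤ 1) :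
    0 ≤ stepR α w Λ q R a ∧ stepR α w Λ q R a ≤ 1 := by
  obtain ⟨f0, f1⟩ := frep_mem h.hα hR0 hR1 ha0 ha1
  have g0 := gfun_nonneg (Λ := Λ) (q := q) f0
  have g1 := gfun_le_one (Λ := Λ) (q := q) f1
  unfold stepR
  constructor <;> nlinarith [h.hw0, h.hw1]

theorem stepR_mono_R {α w Λ q S p L H : ℝ} (h : Hyp α w Λ q S p L H) {R R' a : ℝ}
    (hle : R ≤ R') (hR0 : 0 ≤ R) (hR1 : R ≤ 1) (ha0 : 0 ≤ a) (ha1 : a ≤ 1) :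
    stepR α w Λ q R a ≤ stepR α w Λ q R' a := by
  have h1 : frep α R a ≤ frep α R' a := frep_mono_R h.hα hle ha0 ha1
  have h2 : frep α R a ≤ 1 := (frep_mem h.hα hR0 hR1 ha0 ha1).2
  exact psi_mono h.hΛ h.hq0 h.hw0 h.hw1 h1 h2

theorem stepR_mono_a {α w Λ q S p L H : ℝ} (h : Hyp α w Λ q S p L H) {R a b : ℝ}
    (hR0 : 0 ≤ R) (hR1 : R ≤ 1) (ha0 : 0 ≤ a) (hab : a ≤ b) (hb1 : b ≤ 1) :
    stepR α w Λ q R a ≤ stepR α w Λ q R b := by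
  have h1 : frep α R a ≤ frep α R b := frep_mono_a h.hα hR1 ha0 hab
  have h2 : frep α R a ≤ 1 := (frep_mem h.hα hR0 hR1 ha0 (hab.trans hb1)).2
  exact psi_mono h.hΛ h.hq0 h.hw0 h.hw1 h1 h2


/-- Key exchange inequality: acting `H` after `L` yields lower post-advertisement
reputation than acting `L` after `H`. -/
theorem key {α w Λ q S p L H : ℝ} (h : Hyp α w Λ q S p L H) {R : ℝ}
    (hR0 : 0 ≤ R) (hR1 : R ≤ 1) :
    frep α (stepR α w Λ q R L) H ≤ frep α (stepR α w Λ q R H) L := by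
  have hl0 : 0 ≤ L ^ α := Real.rpow_nonneg h.hL0 α
  have hlh : L ^ α ≤ H ^ α := Real.rpow_le_rpow h.hL0 h.hLH h.hα.le
  have hh1 : H ^ α ≤ 1 := Real.rpow_le_one (h.hL0.trans h.hLH) h.hH1 h.hα.le
  set l := L ^ α with hl
  set hh := H ^ α with hhdef
  have hx : frep α R L = R + (1 - R) * l := rfl
  have hy : frep α R H = R + (1 - R) * hh := rfl
  set x := frep α R L with hxd
  set y := frep α R H with hyd
  have hxy : x ≤ y := by rw [hx, hy]; nlinarith
  have hx1 : x ≤ 1 := by rw [hx]; nlinarith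
  have hy1 : y ≤ 1 := by rw [hy]; nlinarith
  -- the symmetric identity
  have e : x + (1 - x) * hh = y + (1 - y) * l := by rw [hx, hy]; ring
  have hw0 := h.hw0; have hw1 := h.hw1
  show stepR α w Λ q R L + (1 - stepR α w Λ q R L) * hh ≤
    stepR α w Λ q R H + (1 - stepR α w Λ q R H) * l
  unfold stepR gfun
  rw [← hxd, ← hyd]
  by_cases hdx : 0 < dem Λ q x
  · have hdy : 0 < dem Λ q y := lt_of_lt_of_le hdx (dem_mono h.hΛ h.hq0 hxy)
    rw [if_pos hdx, if_pos hdy]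
    nlinarith [mul_le_mul_of_nonneg_left e.le (by linarith : (0:ℝ) ≤ 1 - w),
      mul_le_mul_of_nonneg_left e.ge (by linarith : (0:ℝ) ≤ 1 - w)]
  · rw [if_neg hdx]
    by_cases hdy : 0 < dem Λ q y
    · rw [if_pos hdy]
      nlinarith [mul_nonneg (mul_nonneg hw0 (by linarith : (0:ℝ) ≤ 1 - y))
        (by linarith : (0:ℝ) ≤ 1 - l)]
    · rw [if_neg hdy]
      nlinarith

theorem repC_succ (α w Λ q S : ℝ) (A : ℕ → ℝ) (R1 : ℝ) (i : ℕ) :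
    repC α w Λ q S A R1 (i + 1) =
      (1 - w) * frep α (repC α w Λ q S A R1 i) (A i) +
        w * (if 0 < dem Λ q (frep α (repC α w Λ q S A R1 i) (A i)) then
              min S (dem Λ q (frep α (repC α w Λ q S A R1 i) (A i))) /
                dem Λ q (frep α (repC α w Λ q S A R1 i) (A i))
            else frep α (repC α w Λ q S A R1 i) (A i)) := rfl

theorem repC_mem {α w Λ q S p L H : ℝ} (h : Hyp α w Λ q S p L H) {A : ℕ → ℝ}
    (hA : ∀ i, 0 ≤ A i ∧ A i ≤ 1) {R1 : ℝ} (hR0 : 0 ≤ R1) (hR1 : R1 ≤ 1) :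
    ∀ i, 0 ≤ repC α w Λ q S A R1 i ∧ repC α w Λ q S A R1 i ≤ 1
  | 0 => ⟨hR0, hR1⟩
  | (i + 1) => by
      obtain ⟨h0, h1⟩ := repC_mem h hA hR0 hR1 i
      obtain ⟨f0, f1⟩ := frep_mem h.hα h0 h1 (hA i).1 (hA i).2
      rw [repC_succ]
      have hw0 := h.hw0; have hw1 := h.hw1
      set d := dem Λ q (frep α (repC α w Λ q S A R1 i) (A i)) with hd
      by_cases hdp : 0 < d
      · rw [if_pos hdp]
        have hm1 : min S d / d ≤ 1 := div_le_one_of_le₀ (min_le_right _ _) hdp.le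
        have hm0 : 0 ≤ min S d / d := div_nonneg (le_min h.hS0.le hdp.le) hdp.le
        constructor <;> nlinarith
      · rw [if_neg hdp]
        constructor <;> nlinarith

/-- Under the capacity condition the trajectory follows `stepR`. -/
theorem repC_step {α w Λ q S p L H : ℝ} (h : Hyp α w Λ q S p L H) {A : ℕ → ℝ}
    (hA : ∀ i, 0 ≤ A i ∧ A i ≤ 1) {R1 : ℝ} (hR0 : 0 ≤ R1) (hR1 : R1 ≤ 1) (i : ℕ) :
    repC α w Λ q S A R1 (i + 1) = stepR α w Λ q (repC α w Λ q S A R1 i) (A i) := by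
  obtain ⟨h0, h1⟩ := repC_mem h hA hR0 hR1 i
  obtain ⟨f0, f1⟩ := frep_mem h.hα h0 h1 (hA i).1 (hA i).2
  rw [repC_succ]
  unfold stepR gfun
  congr 1
  set d := dem Λ q (frep α (repC α w Λ q S A R1 i) (A i)) with hd
  by_cases hdp : 0 < d
  · rw [if_pos hdp, if_pos hdp]
    have : min S d = d := min_eq_right (dem_le_S h.hΛ h.hq0 h.hS0 h.hcap f1)
    rw [this, div_self hdp.ne']
  · rw [if_neg hdp, if_neg hdp]

theorem repC_shift (α w Λ q S : ℝ) (A : ℕ → ℝ) (R1 : ℝ) :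
    ∀ i, repC α w Λ q S A R1 (i + 1) =
      repC α w Λ q S (fun j => A (j + 1)) (repC α w Λ q S A R1 1) i
  | 0 => rfl
  | (i + 1) => by
      rw [repC_succ, repC_shift α w Λ q S A R1 i]
      exact (repC_succ α w Λ q S (fun j => A (j + 1)) (repC α w Λ q S A R1 1) i).symm

theorem repC_congr (α w Λ q S : ℝ) {A B : ℕ → ℝ} (R1 : ℝ) :
    ∀ i, (∀ j, j < i → A j = B j) → repC α w Λ q S A R1 i = repC α w Λ q S B R1 i
  | 0, _ => rfl
  | (i + 1), hcon => by
      rw [repC_succ, repC_succ,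
        repC_congr α w Λ q S R1 i (fun j hj => hcon j (hj.trans (Nat.lt_succ_self i))),
        hcon i (Nat.lt_succ_self i)]

theorem repC_mono_R1 {α w Λ q S p L H : ℝ} (h : Hyp α w Λ q S p L H) {A : ℕ → ℝ}
    (hA : ∀ i, 0 ≤ A i ∧ A i ≤ 1) {R1 R1' : ℝ} (hle : R1 ≤ R1')
    (hR0 : 0 ≤ R1) (hR1 : R1 ≤ 1) (hR0' : 0 ≤ R1') (hR1' : R1' ≤ 1) :
    ∀ i, repC α w Λ q S A R1 i ≤ repC α w Λ q S A R1' i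
  | 0 => hle
  | (i + 1) => by
      rw [repC_step h hA hR0 hR1 i, repC_step h hA hR0' hR1' i]
      obtain ⟨g0, g1⟩ := repC_mem h hA hR0 hR1 i
      exact stepR_mono_R h (repC_mono_R1 h hA hle hR0 hR1 hR0' hR1' i) g0 g1
        (hA i).1 (hA i).2

theorem profitC_succ (α w Λ q S p c cA : ℝ) (A : ℕ → ℝ) (R1 : ℝ) (N : ℕ) :
    profitC α w Λ q S p c cA A R1 (N + 1) =
      (p * min S (dem Λ q (frep α R1 (A 0))) - c * S - cA * A 0) +
        profitC α w Λ q S p c cA (fun j => A (j + 1)) (repC α w Λ q S A R1 1) N := by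
  unfold profitC
  rw [Finset.sum_range_succ', add_comm]
  congr 1
  apply Finset.sum_congr rfl
  intro i _
  rw [repC_shift]

theorem profitC_congr (α w Λ q S p c cA : ℝ) {A B : ℕ → ℝ} (R1 : ℝ) (N : ℕ)
    (hcon : ∀ j, j < N → A j = B j) :
    profitC α w Λ q S p c cA A R1 N = profitC α w Λ q S p c cA B R1 N := by
  unfold profitC
  apply Finset.sum_congr rfl
  intro i hi
  rw [Finset.mem_range] at hi
  rw [repC_congr α w Λ q S R1 i (fun j hj => hcon j (hj.trans hi)), hcon i hi]

theorem profitC_mono_R1 {α w Λ q S p L H : ℝ} (c cA : ℝ) (h : Hyp α w Λ q S p L H)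
    {A : ℕ → ℝ} (hA : ∀ i, 0 ≤ A i ∧ A i ≤ 1) {R1 R1' : ℝ} (hle : R1 ≤ R1')
    (hR0 : 0 ≤ R1) (hR1 : R1 ≤ 1) (hR0' : 0 ≤ R1') (hR1' : R1' ≤ 1) (N : ℕ) :
    profitC α w Λ q S p c cA A R1 N ≤ profitC α w Λ q S p c cA A R1' N := by
  unfold profitC
  apply Finset.sum_le_sum
  intro i _
  have h1 : repC α w Λ q S A R1 i ≤ repC α w Λ q S A R1' i :=
    repC_mono_R1 h hA hle hR0 hR1 hR0' hR1' i
  have h2 : frep α (repC α w Λ q S A R1 i) (A i) ≤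
      frep α (repC α w Λ q S A R1' i) (A i) :=
    frep_mono_R h.hα h1 (hA i).1 (hA i).2
  have h3 := dem_mono h.hΛ h.hq0 h2
  have h4 : min S (dem Λ q (frep α (repC α w Λ q S A R1 i) (A i))) ≤
      min S (dem Λ q (frep α (repC α w Λ q S A R1' i) (A i))) :=
    min_le_min le_rfl h3
  have := mul_le_mul_of_nonneg_left h4 h.hp.le
  linarith

/-- Two-period exchange lemma: `L` then `H` is dominated by `H` then `L`. -/
theorem exchange {α w Λ q S p L H : ℝ} (c cA : ℝ) (h : Hyp α w Λ q S p L H)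
    {A B : ℕ → ℝ} (hA0 : A 0 = L) (hA1 : A 1 = H) (hB0 : B 0 = H) (hB1 : B 1 = L)
    (hAB : ∀ j, 2 ≤ j → A j = B j)
    (hAv : ∀ i, 0 ≤ A i ∧ A i ≤ 1) (hBv : ∀ i, 0 ≤ B i ∧ B i ≤ 1)
    {R1 : ℝ} (hR0 : 0 ≤ R1) (hR1 : R1 ≤ 1) (M : ℕ) :
    profitC α w Λ q S p c cA A R1 (M + 2) ≤ profitC α w Λ q S p c cA B R1 (M + 2) := by
  have hL1 : L ≤ 1 := h.hLH.trans h.hH1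
  have hH0 : 0 ≤ H := h.hL0.trans h.hLH
  -- shells
  have hRA1 : repC α w Λ q S A R1 1 = stepR α w Λ q R1 L := by
    rw [repC_step h hAv hR0 hR1 0, hA0]; rfl
  have hRB1 : repC α w Λ q S B R1 1 = stepR α w Λ q R1 H := by
    rw [repC_step h hBv hR0 hR1 0, hB0]; rfl
  obtain ⟨hsl0, hsl1⟩ := stepR_mem h hR0 hR1 h.hL0 hL1
  obtain ⟨hsh0, hsh1⟩ := stepR_mem h hR0 hR1 hH0 h.hH1
  have hA'v : ∀ i, 0 ≤ A (i + 1) ∧ A (i + 1) ≤ 1 := fun i => hAv (i + 1)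
  have hB'v : ∀ i, 0 ≤ B (i + 1) ∧ B (i + 1) ≤ 1 := fun i => hBv (i + 1)
  have hRA2 : repC α w Λ q S (fun j => A (j + 1)) (stepR α w Λ q R1 L) 1 =
      stepR α w Λ q (stepR α w Λ q R1 L) H := by
    rw [repC_step h hA'v hsl0 hsl1 0]
    show stepR α w Λ q (stepR α w Λ q R1 L) (A 1) = _
    rw [hA1]
  have hRB2 : repC α w Λ q S (fun j => B (j + 1)) (stepR α w Λ q R1 H) 1 =
      stepR α w Λ q (stepR α w Λ q R1 H) L := by
    rw [repC_step h hB'v hsh0 hsh1 0]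
    show stepR α w Λ q (stepR α w Λ q R1 H) (B 1) = _
    rw [hB1]
  rw [show M + 2 = (M + 1) + 1 from rfl, profitC_succ, profitC_succ,
    profitC_succ, profitC_succ]
  simp only [Nat.zero_add]
  rw [hA0, hA1, hB0, hB1, hRA1, hRB1, hRA2, hRB2]
  -- tail sequences agree
  have htail : profitC α w Λ q S p c cA (fun j => A (j + 1 + 1))
        (stepR α w Λ q (stepR α w Λ q R1 L) H) M ≤
      profitC α w Λ q S p c cA (fun j => B (j + 1 + 1))
        (stepR α w Λ q (stepR α w Λ q R1 H) L) M := by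
    have heq : ∀ j, j < M → (fun j => A (j + 1 + 1)) j = (fun j => B (j + 1 + 1)) j :=
      fun j _ => hAB (j + 2) (by omega)
    rw [profitC_congr α w Λ q S p c cA _ M heq]
    obtain ⟨t10, t11⟩ := stepR_mem h hsl0 hsl1 hH0 h.hH1
    obtain ⟨t20, t21⟩ := stepR_mem h hsh0 hsh1 h.hL0 hL1
    have hkey : stepR α w Λ q (stepR α w Λ q R1 L) H ≤
        stepR α w Λ q (stepR α w Λ q R1 H) L := by
      have h1 := key h hR0 hR1
      have h2 : frep α (stepR α w Λ q R1 L) H ≤ 1 :=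
        (frep_mem h.hα hsl0 hsl1 hH0 h.hH1).2
      exact psi_mono h.hΛ h.hq0 h.hw0 h.hw1 h1 h2
    exact profitC_mono_R1 c cA h (fun i => hBv (i + 2)) hkey t10 t11 t20 t21 M
  -- per-period rewards exchange
  have hr1 : dem Λ q (frep α R1 L) ≤ dem Λ q (frep α R1 H) :=
    dem_mono h.hΛ h.hq0 (frep_mono_a h.hα hR1 h.hL0 h.hLH)
  have hr2 : dem Λ q (frep α (stepR α w Λ q R1 L) H) ≤
      dem Λ q (frep α (stepR α w Λ q R1 H) L) :=
    dem_mono h.hΛ h.hq0 (key h hR0 hR1)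
  -- mins are demands
  have m1 : min S (dem Λ q (frep α R1 L)) = dem Λ q (frep α R1 L) :=
    min_eq_right (dem_le_S h.hΛ h.hq0 h.hS0 h.hcap (frep_mem h.hα hR0 hR1 h.hL0 hL1).2)
  have m2 : min S (dem Λ q (frep α R1 H)) = dem Λ q (frep α R1 H) :=
    min_eq_right (dem_le_S h.hΛ h.hq0 h.hS0 h.hcap (frep_mem h.hα hR0 hR1 hH0 h.hH1).2)
  have m3 : min S (dem Λ q (frep α (stepR α w Λ q R1 L) H)) =
      dem Λ q (frep α (stepR α w Λ q R1 L) H) :=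
    min_eq_right (dem_le_S h.hΛ h.hq0 h.hS0 h.hcap
      (frep_mem h.hα hsl0 hsl1 hH0 h.hH1).2)
  have m4 : min S (dem Λ q (frep α (stepR α w Λ q R1 H) L)) =
      dem Λ q (frep α (stepR α w Λ q R1 H) L) :=
    min_eq_right (dem_le_S h.hΛ h.hq0 h.hS0 h.hcap
      (frep_mem h.hα hsh0 hsh1 h.hL0 hL1).2)
  rw [m1, m2, m3, m4]
  have hp := h.hp
  nlinarith [mul_le_mul_of_nonneg_left hr1 hp.le, mul_le_mul_of_nonneg_left hr2 hp.le]

/-- Single-switch sequence. -/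
def swf (L H : ℝ) (k : ℕ) : ℕ → ℝ := fun i => if i < k then H else L

/-- `L` first, then `H` for `k` periods, then `L`. -/
def mid (L H : ℝ) (k : ℕ) : ℕ → ℝ :=
  fun i => if i = 0 then L else if i < k + 1 then H else L

/-- `mid` with its first two entries exchanged. -/
def mid' (L H : ℝ) (k : ℕ) : ℕ → ℝ :=
  fun i => if i = 0 then H else if i = 1 then L else mid L H k i

theorem swf_vals (L H : ℝ) (k : ℕ) : ∀ i, swf L H k i = L ∨ swf L H k i = H := by
  intro i; unfold swf; split
  · right; rfl
  · left; rfl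

theorem mid_vals (L H : ℝ) (k : ℕ) : ∀ i, mid L H k i = L ∨ mid L H k i = H := by
  intro i; unfold mid; split
  · left; rfl
  · split
    · right; rfl
    · left; rfl

theorem mid'_vals (L H : ℝ) (k : ℕ) : ∀ i, mid' L H k i = L ∨ mid' L H k i = H := by
  intro i; unfold mid'; split
  · right; rfl
  · split
    · left; rfl
    · exact mid_vals L H k i

theorem swf_zero (L H : ℝ) (k : ℕ) : swf L H (k + 1) 0 = H := by
  simp [swf]

theorem swf_zero' (L H : ℝ) : swf L H 0 0 = L := by
  simp [swf]

theorem swf_shift (L H : ℝ) (k : ℕ) :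
    (fun j => swf L H (k + 1) (j + 1)) = swf L H k := by
  funext j
  simp [swf, Nat.add_lt_add_iff_right]

theorem swf_shift' (L H : ℝ) : (fun j => swf L H 0 (j + 1)) = swf L H 0 := by
  funext j; simp [swf]

theorem mid_zero (L H : ℝ) (k : ℕ) : mid L H k 0 = L := rfl

theorem mid_one (L H : ℝ) (k : ℕ) : mid L H (k + 1) 1 = H := by
  simp [mid]

theorem mid_shift (L H : ℝ) (k : ℕ) :
    (fun j => mid L H k (j + 1)) = swf L H k := by
  funext j
  simp [mid, swf, Nat.add_lt_add_iff_right]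

theorem mid'_zero (L H : ℝ) (k : ℕ) : mid' L H k 0 = H := rfl

theorem mid'_one (L H : ℝ) (k : ℕ) : mid' L H k 1 = L := rfl

theorem mid'_eq_mid (L H : ℝ) (k : ℕ) : ∀ j, 2 ≤ j → mid L H k j = mid' L H k j := by
  intro j hj
  unfold mid'
  rw [if_neg (by omega), if_neg (by omega)]

theorem main_aux {α w Λ q S p L H : ℝ} (c cA : ℝ) (h : Hyp α w Λ q S p L H) :
    ∀ N : ℕ, ∀ R1 : ℝ, 0 ≤ R1 → R1 ≤ 1 → ∀ A : ℕ → ℝ,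
      (∀ i, A i = L ∨ A i = H) →
      ∃ k ≤ N, profitC α w Λ q S p c cA A R1 N ≤
        profitC α w Λ q S p c cA (swf L H k) R1 N := by
  intro N
  have hL1 : L ≤ 1 := h.hLH.trans h.hH1
  have hH0 : 0 ≤ H := h.hL0.trans h.hLH
  have hbd : ∀ (B : ℕ → ℝ), (∀ i, B i = L ∨ B i = H) → ∀ i, 0 ≤ B i ∧ B i ≤ 1 := by
    intro B hB i
    rcases hB i with hb | hb <;> rw [hb]
    exacts [⟨h.hL0, hL1⟩, ⟨hH0, h.hH1⟩]
  induction N with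
  | zero =>
    intro R1 _ _ A _
    exact ⟨0, le_rfl, by simp [profitC]⟩
  | succ N ih =>
    intro R1 hR0 hR1 A hA
    have hAv := hbd A hA
    have hAs : ∀ i, A (i + 1) = L ∨ A (i + 1) = H := fun i => hA (i + 1)
    have hdecA := profitC_succ α w Λ q S p c cA A R1 N
    rcases hA 0 with hA0 | hA0
    · -- A 0 = L
      have hstepL : repC α w Λ q S A R1 1 = stepR α w Λ q R1 L := by
        rw [repC_step h hAv hR0 hR1 0, hA0]; rfl
      obtain ⟨s0, s1⟩ := stepR_mem h hR0 hR1 h.hL0 hL1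
      obtain ⟨k', hk', hle⟩ := ih (stepR α w Λ q R1 L) s0 s1 (fun j => A (j + 1)) hAs
      cases k' with
      | zero =>
        -- dominated by the all-L sequence
        refine ⟨0, by omega, ?_⟩
        have hsw0 : repC α w Λ q S (swf L H 0) R1 1 = stepR α w Λ q R1 L := by
          rw [repC_step h (hbd _ (swf_vals L H 0)) hR0 hR1 0, swf_zero']; rfl
        calc profitC α w Λ q S p c cA A R1 (N + 1)
            = (p * min S (dem Λ q (frep α R1 L)) - c * S - cA * L) +
              profitC α w Λ q S p c cA (fun j => A (j + 1)) (stepR α w Λ q R1 L) N := by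
              rw [hdecA, hstepL, hA0]
          _ ≤ (p * min S (dem Λ q (frep α R1 L)) - c * S - cA * L) +
              profitC α w Λ q S p c cA (swf L H 0) (stepR α w Λ q R1 L) N := by
              linarith
          _ = profitC α w Λ q S p c cA (swf L H 0) R1 (N + 1) := by
              rw [profitC_succ α w Λ q S p c cA (swf L H 0) R1 N, swf_zero',
                swf_shift', hsw0]
      | succ j =>
        -- k' = j + 1 ≥ 1 : exchange needed
        cases N with
        | zero => omega
        | succ M =>
          have hmidv := mid_vals L H (j + 1)
          have hmid'v := mid'_vals L H (j + 1)
          have hmid1 : repC α w Λ q S (mid L H (j + 1)) R1 1 = stepR α w Λ q R1 L := by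
            rw [repC_step h (hbd _ hmidv) hR0 hR1 0, mid_zero]; rfl
          -- step 1 : A is dominated by (mid L H (j+1))
          have step1 : profitC α w Λ q S p c cA A R1 (M + 1 + 1) ≤
              profitC α w Λ q S p c cA (mid L H (j + 1)) R1 (M + 1 + 1) := by
            calc profitC α w Λ q S p c cA A R1 (M + 1 + 1)
                = (p * min S (dem Λ q (frep α R1 L)) - c * S - cA * L) +
                  profitC α w Λ q S p c cA (fun j => A (j + 1))
                    (stepR α w Λ q R1 L) (M + 1) := by
                  rw [hdecA, hstepL, hA0]
              _ ≤ (p * min S (dem Λ q (frep α R1 L)) - c * S - cA * L) +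
                  profitC α w Λ q S p c cA (swf L H (j + 1))
                    (stepR α w Λ q R1 L) (M + 1) := by
                  linarith
              _ = profitC α w Λ q S p c cA (mid L H (j + 1)) R1 (M + 1 + 1) := by
                  rw [profitC_succ α w Λ q S p c cA (mid L H (j + 1)) R1 (M + 1),
                    mid_zero, mid_shift, hmid1]
          -- step 2 : exchange the first two periods
          have step2 : profitC α w Λ q S p c cA (mid L H (j + 1)) R1 (M + 2) ≤
              profitC α w Λ q S p c cA (mid' L H (j + 1)) R1 (M + 2) :=
            exchange c cA h (mid_zero L H (j + 1)) (mid_one L H j)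
              (mid'_zero L H (j + 1)) (mid'_one L H (j + 1))
              (mid'_eq_mid L H (j + 1)) (hbd _ hmidv) (hbd _ hmid'v) hR0 hR1 M
          -- step 3 : apply the induction hypothesis after the leading H
          obtain ⟨sh0, sh1⟩ := stepR_mem h hR0 hR1 hH0 h.hH1
          have hmid'1 : repC α w Λ q S (mid' L H (j + 1)) R1 1 =
              stepR α w Λ q R1 H := by
            rw [repC_step h (hbd _ hmid'v) hR0 hR1 0, mid'_zero]; rfl
          have hmsv : ∀ i, mid' L H (j + 1) (i + 1) = L ∨ mid' L H (j + 1) (i + 1) = H :=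
            fun i => hmid'v (i + 1)
          obtain ⟨k'', hk'', hle2⟩ := ih (stepR α w Λ q R1 H) sh0 sh1
            (fun i => mid' L H (j + 1) (i + 1)) hmsv
          refine ⟨k'' + 1, by omega, ?_⟩
          have hswk : repC α w Λ q S (swf L H (k'' + 1)) R1 1 =
              stepR α w Λ q R1 H := by
            rw [repC_step h (hbd _ (swf_vals L H (k'' + 1))) hR0 hR1 0, swf_zero]; rfl
          calc profitC α w Λ q S p c cA A R1 (M + 1 + 1)
              ≤ profitC α w Λ q S p c cA (mid' L H (j + 1)) R1 (M + 1 + 1) :=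
                step1.trans step2
            _ = (p * min S (dem Λ q (frep α R1 H)) - c * S - cA * H) +
                profitC α w Λ q S p c cA (fun i => mid' L H (j + 1) (i + 1))
                  (stepR α w Λ q R1 H) (M + 1) := by
                rw [profitC_succ α w Λ q S p c cA (mid' L H (j + 1)) R1 (M + 1),
                  mid'_zero, hmid'1]
            _ ≤ (p * min S (dem Λ q (frep α R1 H)) - c * S - cA * H) +
                profitC α w Λ q S p c cA (swf L H k'')
                  (stepR α w Λ q R1 H) (M + 1) := by
                linarith
            _ = profitC α w Λ q S p c cA (swf L H (k'' + 1)) R1 (M + 1 + 1) := by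
                rw [profitC_succ α w Λ q S p c cA (swf L H (k'' + 1)) R1 (M + 1),
                  swf_zero, swf_shift, hswk]
    · -- A 0 = H
      have hstepH : repC α w Λ q S A R1 1 = stepR α w Λ q R1 H := by
        rw [repC_step h hAv hR0 hR1 0, hA0]; rfl
      obtain ⟨s0, s1⟩ := stepR_mem h hR0 hR1 hH0 h.hH1
      obtain ⟨k, hk, hle⟩ := ih (stepR α w Λ q R1 H) s0 s1 (fun j => A (j + 1)) hAs
      refine ⟨k + 1, by omega, ?_⟩
      have hswk : repC α w Λ q S (swf L H (k + 1)) R1 1 = stepR α w Λ q R1 H := by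
        rw [repC_step h (hbd _ (swf_vals L H (k + 1))) hR0 hR1 0, swf_zero]; rfl
      calc profitC α w Λ q S p c cA A R1 (N + 1)
          = (p * min S (dem Λ q (frep α R1 H)) - c * S - cA * H) +
            profitC α w Λ q S p c cA (fun j => A (j + 1)) (stepR α w Λ q R1 H) N := by
            rw [hdecA, hstepH, hA0]
        _ ≤ (p * min S (dem Λ q (frep α R1 H)) - c * S - cA * H) +
            profitC α w Λ q S p c cA (swf L H k) (stepR α w Λ q R1 H) N := by
            linarith
        _ = profitC α w Λ q S p c cA (swf L H (k + 1)) R1 (N + 1) := by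
            rw [profitC_succ α w Λ q S p c cA (swf L H (k + 1)) R1 N, swf_zero,
              swf_shift, hswk]
end SW


/-- Proposition 4: under constant capacity, if demand can never exceed the
capacity, the aware firm has an optimal single-switch advertisement sequence
(`H` in the first `k` periods, `L` afterwards). -/
theorem single_switching_point_constant_capacity
    (Λ c p cA m u α w L H S q : ℝ) (N : ℕ)
    (hΛ : 0 < Λ) (hc : 0 < c) (hcp : c < p) (hcA : 0 ≤ cA)
    (hm : 0 < m) (hu : 0 ≤ u) (hqdef : q = (u + p) / m) (hq1 : q < 1)
    (hα : 0 < α) (hw0 : 0 ≤ w) (hw1 : w ≤ 1)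
    (hL0 : 0 ≤ L) (hLH : L < H) (hH1 : H ≤ 1)
    (hS0 : 0 < S) (hSΛ : S ≤ Λ)
    (hcap : Λ * (1 - (u + p) / m) ≤ S)
    (R1 : ℝ) (hR10 : 0 ≤ R1) (hR11 : R1 ≤ 1) :
    ∃ k ≤ N, ∀ A : ℕ → ℝ, (∀ i, A i = L ∨ A i = H) →
      profitC α w Λ q S p c cA A R1 N ≤
        profitC α w Λ q S p c cA (fun i => if i < k then H else L) R1 N := by
  have hp : 0 < p := hc.trans hcp
  have hq0 : 0 < q := by
    rw [hqdef]
    exact div_pos (by linarith) hm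
  have hcap' : Λ * (1 - q) ≤ S := by rw [hqdef]; exact hcap
  have h : SW.Hyp α w Λ q S p L H :=
    ⟨hΛ, hq0, hq1, hα, hw0, hw1, hL0, hLH.le, hH1, hS0, hcap', hp⟩
  obtain ⟨k, hk, hmax⟩ := Finset.exists_max_image (Finset.range (N + 1))
    (fun k => profitC α w Λ q S p c cA (SW.swf L H k) R1 N)
    ⟨0, Finset.mem_range.2 (Nat.succ_pos N)⟩
  refine ⟨k, Nat.lt_succ_iff.1 (Finset.mem_range.1 hk), ?_⟩
  intro A hA
  obtain ⟨kA, hkA, hle⟩ := SW.main_aux c cA h N R1 hR10 hR11 A hA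
  exact hle.trans (hmax kA (Finset.mem_range.2 (Nat.lt_succ_of_le hkA)))
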